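/- Let Ŝ, R̂ be invertible diagonal Nₑ×Nₑ matrices, S, R invertible diagonal Nₙ×Nₙ matrices, and Mᵉ an Nₑ×Nₙ matrix. Define Wₙ = R⁻¹·S⁻¹·(Mᵉ)ᵀ·Ŝ·R̂, dV = (2π/3)·S·R·𝟙, dVᵉ = 2π·Ŝ·R̂·𝟙 (where 𝟙 denotes the all-ones vector). Then for any Q ∈ ℝ^{Nₙ}, Uᵉ ∈ ℝ^{Nₑ}, with Qᵉ = (1/3)·Mᵉ·Q, one has dVᵀ·(Q ∘ (Wₙ·Uᵉ)) = (dVᵉ)ᵀ·(Qᵉ ∘ Uᵉ), where ∘ denotes entrywise (Hadamard) product. -/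

import Mathlib

open Matrix Real

theorem stmt_8 {Ne Nn : ℕ}
    (sh rh : Fin Ne → ℝ) (s r : Fin Nn → ℝ)
    (hsh : ∀ e, sh e ≠ 0) (hrh : ∀ e, rh e ≠ 0)
    (hs : ∀ n, s n ≠ 0) (hr : ∀ n, r n ≠ 0)
    (Me : Matrix (Fin Ne) (Fin Nn) ℝ)
    (Wn : Matrix (Fin Nn) (Fin Ne) ℝ)
    (hWn : Wn = (Matrix.diagonal r)⁻¹ * (Matrix.diagonal s)⁻¹ * Meᵀ *
        Matrix.diagonal sh * Matrix.diagonal rh)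
    (dV : Fin Nn → ℝ)
    (hdV : dV = (2 * π / 3) • (Matrix.diagonal s * Matrix.diagonal r).mulVec 1)
    (dVe : Fin Ne → ℝ)
    (hdVe : dVe = (2 * π) • (Matrix.diagonal sh * Matrix.diagonal rh).mulVec 1)
    (Q : Fin Nn → ℝ) (Ue : Fin Ne → ℝ)
    (Qe : Fin Ne → ℝ) (hQe : Qe = (1/3 : ℝ) • Me.mulVec Q) :
    dV ⬝ᵥ (Q * Wn.mulVec Ue) = dVe ⬝ᵥ (Qe * Ue) := by
  subst hWn hdV hdVe hQe
  have hinv : ∀ {k} (v : Fin k → ℝ), (∀ i, v i ≠ 0) →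
      (Matrix.diagonal v)⁻¹ = Matrix.diagonal (fun i => (v i)⁻¹) := by
    intro k v hv
    apply Matrix.inv_eq_right_inv
    rw [Matrix.diagonal_mul_diagonal]
    ext i j
    by_cases h : i = j <;>
      simp [Matrix.diagonal_apply, h, Matrix.one_apply, mul_inv_cancel₀ (hv _)]
  rw [hinv r hr, hinv s hs, Matrix.diagonal_mul_diagonal,
    Matrix.diagonal_mul_diagonal, Matrix.diagonal_mul_diagonal]
  simp only [dotProduct, Matrix.mulVec, dotProduct, Pi.smul_apply, Pi.mul_apply,
    smul_eq_mul, Pi.one_apply, mul_one, Ring.inverse_eq_inv', Pi.inv_apply,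
    Matrix.transpose_apply, Matrix.diagonal_apply, mul_ite, ite_mul,
    mul_zero, zero_mul, Finset.sum_ite_eq, Finset.sum_ite_eq',
    Finset.mem_univ, if_true, Finset.mul_sum, Finset.sum_mul]
  rw [Finset.sum_comm]
  refine Finset.sum_congr rfl fun e _ => Finset.sum_congr rfl fun n _ => ?_
  simp only [Matrix.mul_diagonal, Matrix.diagonal_mul, Matrix.transpose_apply]
  field_simp [hs n, hr n]
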